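/- arXiv:1510.01618 — 3 statements merged into one kernel-verified Lean document; each statement's English description precedes it below -/
import Mathlib

section
/- For a, b > 0, λ ∈ ℝ and z > 0, the derivative of z ↦ z^{b-1} E_{a,b}(λ z^a) equals z^{b-2} E_{a,b-1}(λ z^a), provided b > 1 so that E_{a,b-1} is defined. -/
open Real Set Filter

noncomputable def mittagLeffler (a b z : ℝ) : ℝ :=
  ∑' k : ℕ, z ^ k / Real.Gamma (k * a + b)

lemma gamma_lb {a x : ℝ} (ha : 0 < a) (hx : 1 < x) :
    Real.Gamma x * (x - 1) ^ a ≤ Real.Gamma (x + a) := by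
  have h0 : (0:ℝ) < x - 1 := by linarith
  have hx0 : (0:ℝ) < x := by linarith
  have hGx : 0 < Real.Gamma x := Real.Gamma_pos_of_pos hx0
  have hGx1 : 0 < Real.Gamma (x - 1) := Real.Gamma_pos_of_pos h0
  have hGxa : 0 < Real.Gamma (x + a) := Real.Gamma_pos_of_pos (by linarith)
  have hslope := Real.convexOn_log_Gamma.slope_mono_adjacent
    (x := x - 1) (z := x + a) (y := x)
    (mem_Ioi.2 h0) (mem_Ioi.2 (by linarith)) (by linarith) (by linarith)
  simp only [Function.comp_apply] at hslope
  have hfe : Real.Gamma x = (x - 1) * Real.Gamma (x - 1) := by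
    have := Real.Gamma_add_one (s := x - 1) h0.ne'
    rwa [sub_add_cancel] at this
  have h1 : Real.log (Real.Gamma x) - Real.log (Real.Gamma (x - 1)) = Real.log (x - 1) := by
    rw [hfe, Real.log_mul h0.ne' hGx1.ne']; ring
  rw [sub_sub_cancel, div_one, h1] at hslope
  -- hslope : log (x-1) ≤ (log Γ(x+a) - log Γ x) / (x + a - x)
  have h2 : Real.log (Real.Gamma x) + a * Real.log (x - 1) ≤ Real.log (Real.Gamma (x + a)) := by
    have hxa : x + a - x = a := by ring
    rw [hxa, le_div_iff₀ ha] at hslope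
    linarith
  calc Real.Gamma x * (x - 1) ^ a
      = Real.exp (Real.log (Real.Gamma x) + a * Real.log (x - 1)) := by
        rw [Real.exp_add, Real.exp_log hGx, Real.rpow_def_of_pos h0, mul_comm a]
    _ ≤ Real.exp (Real.log (Real.Gamma (x + a))) := Real.exp_le_exp.2 h2
    _ = Real.Gamma (x + a) := Real.exp_log hGxa

lemma summable_ml (a c r : ℝ) (ha : 0 < a) (hc : 0 < c) (hr : 0 ≤ r) :
    Summable (fun k : ℕ => r ^ k / Real.Gamma ((k : ℝ) * a + c)) := by
  apply summable_of_ratio_norm_eventually_le (r := 1/2) (by norm_num)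
  have t1 : Tendsto (fun k : ℕ => (k : ℝ) * a + c - 1) atTop atTop := by
    have := tendsto_atTop_add_const_right atTop (c - 1)
      (tendsto_natCast_atTop_atTop.atTop_mul_const ha)
    exact this.congr (fun k => by ring)
  have t2 : Tendsto (fun k : ℕ => ((k : ℝ) * a + c - 1) ^ a) atTop atTop :=
    (tendsto_rpow_atTop ha).comp t1
  filter_upwards [t1.eventually_gt_atTop 1, t2.eventually_ge_atTop (2 * r)] with k hk1 hk2
  have hx1 : 1 < (k : ℝ) * a + c := by linarith
  have hx0 : 0 < (k : ℝ) * a + c := by linarith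
  have hGx : 0 < Real.Gamma ((k : ℝ) * a + c) := Real.Gamma_pos_of_pos hx0
  have hGxa : 0 < Real.Gamma ((k : ℝ) * a + c + a) := Real.Gamma_pos_of_pos (by linarith)
  have hcast : ((k + 1 : ℕ) : ℝ) * a + c = (k : ℝ) * a + c + a := by push_cast; ring
  rw [hcast]
  rw [Real.norm_eq_abs, Real.norm_eq_abs, abs_of_nonneg (by positivity), abs_of_nonneg (by positivity)]
  rcases eq_or_lt_of_le hr with h0 | hrpos
  · rw [← h0]; simp [zero_pow (Nat.succ_ne_zero k)]; positivity
  · have hG2 : 2 * r * Real.Gamma ((k : ℝ) * a + c) ≤ Real.Gamma ((k : ℝ) * a + c + a) := by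
      calc 2 * r * Real.Gamma ((k : ℝ) * a + c)
          ≤ ((k : ℝ) * a + c - 1) ^ a * Real.Gamma ((k : ℝ) * a + c) := by
            apply mul_le_mul_of_nonneg_right hk2 hGx.le
        _ = Real.Gamma ((k : ℝ) * a + c) * ((k : ℝ) * a + c - 1) ^ a := by ring
        _ ≤ _ := gamma_lb ha hx1
    have h2r : 0 < 2 * r * Real.Gamma ((k : ℝ) * a + c) := by positivity
    calc r ^ (k + 1) / Real.Gamma ((k : ℝ) * a + c + a)
        ≤ r ^ (k + 1) / (2 * r * Real.Gamma ((k : ℝ) * a + c)) := by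
          apply div_le_div_of_nonneg_left (by positivity) h2r hG2
      _ = 1 / 2 * (r ^ k / Real.Gamma ((k : ℝ) * a + c)) := by
          rw [pow_succ]; field_simp

lemma key_eq (a c lam : ℝ) {y : ℝ} (hy : 0 < y) :
    y ^ (c - 1) * mittagLeffler a c (lam * y ^ a) =
      ∑' k : ℕ, lam ^ k * y ^ ((k : ℝ) * a + c - 1) / Real.Gamma ((k : ℝ) * a + c) := by
  rw [mittagLeffler, ← tsum_mul_left]
  refine tsum_congr fun k => ?_
  have h1 : (lam * y ^ a) ^ k = lam ^ k * y ^ (a * (k : ℝ)) := by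
    rw [mul_pow, ← Real.rpow_natCast (y ^ a) k, ← Real.rpow_mul hy.le]
  have h2 : y ^ (c - 1) * y ^ (a * (k : ℝ)) = y ^ ((k : ℝ) * a + c - 1) := by
    rw [← Real.rpow_add hy]; ring_nf
  rw [h1]
  field_simp
  rw [show a * (k:ℝ) + c - 1 = (k:ℝ)*a + c - 1 by ring, ← h2]; ring

theorem mittagLeffler_hasDerivAt (a b lam z : ℝ) (ha : 0 < a) (hb : 1 < b) (hz : 0 < z) :
    HasDerivAt (fun x : ℝ => x ^ (b - 1) * mittagLeffler a b (lam * x ^ a))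
      (z ^ (b - 2) * mittagLeffler a (b - 1) (lam * z ^ a)) z := by
  set g : ℕ → ℝ → ℝ := fun k x =>
    lam ^ k * x ^ ((k : ℝ) * a + b - 1) / Real.Gamma ((k : ℝ) * a + b) with hg
  set g' : ℕ → ℝ → ℝ := fun k x =>
    lam ^ k * x ^ ((k : ℝ) * a + (b - 1) - 1) / Real.Gamma ((k : ℝ) * a + (b - 1)) with hg'
  set C : ℝ := (z / 2) ^ (b - 2) + (2 * z) ^ (b - 2) with hC
  set u : ℕ → ℝ := fun k =>
    C * ((|lam| * (2 * z) ^ a) ^ k / Real.Gamma ((k : ℝ) * a + (b - 1))) with hu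
  have hb0 : (0:ℝ) < b - 1 := by linarith
  have hsum_u : Summable u :=
    (summable_ml a (b - 1) (|lam| * (2 * z) ^ a) ha hb0 (by positivity)).mul_left C
  have hs_open : IsOpen (Ioo (z/2) (2*z)) := isOpen_Ioo
  have hs_conn : IsPreconnected (Ioo (z/2) (2*z)) := (convex_Ioo _ _).isPreconnected
  have hz_mem : z ∈ Ioo (z/2) (2*z) := ⟨by linarith, by linarith⟩
  have hderiv : ∀ k x, x ∈ Ioo (z/2) (2*z) → HasDerivAt (g k) (g' k x) x := by
    intro k x hx
    have hx0 : 0 < x := lt_trans (by linarith) hx.1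
    have hka : (0:ℝ) ≤ (k : ℝ) * a := by positivity
    have he : (0:ℝ) < (k : ℝ) * a + b - 1 := by linarith
    have h1 : HasDerivAt (fun x : ℝ => x ^ ((k:ℝ)*a+b-1))
        (((k:ℝ)*a+b-1) * x ^ ((k:ℝ)*a+b-1-1)) x :=
      Real.hasDerivAt_rpow_const (Or.inl hx0.ne')
    have h2 := h1.const_mul (lam ^ k / Real.Gamma ((k:ℝ)*a+b))
    have hfun : (fun x : ℝ => lam ^ k / Real.Gamma ((k:ℝ)*a+b) * x ^ ((k:ℝ)*a+b-1)) = g k := by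
      funext t; rw [hg]; ring
    rw [hfun] at h2
    refine h2.congr_deriv (Eq.symm ?_)
    have hGfe : Real.Gamma ((k:ℝ)*a+b) = ((k:ℝ)*a+b-1) * Real.Gamma ((k:ℝ)*a+b-1) := by
      have h3 := Real.Gamma_add_one (s := (k:ℝ)*a+b-1) he.ne'
      rwa [sub_add_cancel] at h3
    have hGpos : 0 < Real.Gamma ((k:ℝ)*a+b-1) := Real.Gamma_pos_of_pos he
    simp only [hg']
    have hexp : (k:ℝ)*a+(b-1)-1 = (k:ℝ)*a+b-1-1 := by ring
    have hexp2 : (k:ℝ)*a+(b-1) = (k:ℝ)*a+b-1 := by ring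
    rw [hexp, hexp2, hGfe]
    field_simp
  have hbound : ∀ k x, x ∈ Ioo (z/2) (2*z) → ‖g' k x‖ ≤ u k := by
    intro k x hx
    have hx0 : 0 < x := lt_trans (by linarith) hx.1
    have hka : (0:ℝ) ≤ (k : ℝ) * a := by positivity
    have hGpos : 0 < Real.Gamma ((k:ℝ)*a+(b-1)) := Real.Gamma_pos_of_pos (by linarith)
    simp only [hg', hu]
    rw [Real.norm_eq_abs, abs_div, abs_mul, abs_pow,
      abs_of_nonneg (Real.rpow_nonneg hx0.le _), abs_of_pos hGpos]
    have hsplit : x ^ ((k:ℝ)*a+(b-1)-1) = x ^ ((k:ℝ)*a) * x ^ (b-2) := by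
      rw [← Real.rpow_add hx0]; ring_nf
    have hb1 : x ^ ((k:ℝ)*a) ≤ (2*z) ^ ((k:ℝ)*a) :=
      Real.rpow_le_rpow hx0.le hx.2.le hka
    have hb2 : x ^ (b-2) ≤ C := by
      rcases le_total 2 b with h | h
      · calc x^(b-2) ≤ (2*z)^(b-2) := Real.rpow_le_rpow hx0.le hx.2.le (by linarith)
          _ ≤ C := le_add_of_nonneg_left (by positivity)
      · calc x^(b-2) ≤ (z/2)^(b-2) := Real.rpow_le_rpow_of_nonpos (by linarith) hx.1.le (by linarith)
          _ ≤ C := le_add_of_nonneg_right (by positivity)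
    have hpowk : (|lam| * (2*z)^a)^k = |lam|^k * (2*z)^((k:ℝ)*a) := by
      rw [mul_pow, ← Real.rpow_natCast ((2*z)^a) k, ← Real.rpow_mul (by positivity), mul_comm a]
    rw [hsplit, hpowk, ← mul_div_assoc, div_le_div_iff_of_pos_right hGpos]
    calc |lam|^k * (x^((k:ℝ)*a) * x^(b-2))
        ≤ |lam|^k * ((2*z)^((k:ℝ)*a) * C) := by
          apply mul_le_mul_of_nonneg_left _ (by positivity)
          apply mul_le_mul hb1 hb2 (Real.rpow_nonneg hx0.le _) (by positivity)
      _ = C * (|lam|^k * (2*z)^((k:ℝ)*a)) := by ring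
  have hsum0 : Summable (fun k => g k z) := by
    apply Summable.of_norm_bounded
      ((summable_ml a b (|lam| * z^a) ha (by linarith) (by positivity)).mul_left (z^(b-1)))
    intro k
    have hka : (0:ℝ) ≤ (k : ℝ) * a := by positivity
    have hGpos : 0 < Real.Gamma ((k:ℝ)*a+b) := Real.Gamma_pos_of_pos (by linarith)
    simp only [hg]
    rw [Real.norm_eq_abs, abs_div, abs_mul, abs_pow,
      abs_of_nonneg (Real.rpow_nonneg hz.le _), abs_of_pos hGpos]
    apply le_of_eq
    have hsplit : z ^ ((k:ℝ)*a+b-1) = z ^ ((k:ℝ)*a) * z ^ (b-1) := by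
      rw [← Real.rpow_add hz]; ring_nf
    have hpowk : (|lam| * z^a)^k = |lam|^k * z^((k:ℝ)*a) := by
      rw [mul_pow, ← Real.rpow_natCast (z^a) k, ← Real.rpow_mul hz.le, mul_comm a]
    rw [hsplit, hpowk]
    ring
  have main := hasDerivAt_tsum_of_isPreconnected hsum_u hs_open hs_conn hderiv hbound
    hz_mem hsum0 hz_mem
  have hval : (∑' k, g' k z) = z ^ (b - 2) * mittagLeffler a (b - 1) (lam * z ^ a) := by
    rw [show b - 2 = b - 1 - 1 by ring]
    exact (key_eq a (b-1) lam hz).symm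
  rw [← hval]
  apply main.congr_of_eventuallyEq
  filter_upwards [hs_open.mem_nhds hz_mem] with y hy
  have hy0 : 0 < y := lt_trans (by linarith [hy.1]) hy.1
  exact key_eq a b lam hy0
end

section
/- Let f be κ-Hölder continuous and g be γ-Hölder continuous on [s,t] with κ + γ > 1. Then the Young integral J_{st}(f dg), defined as the limit of Riemann sums Σ f_{t_i}(g_{t_{i+1}} - g_{t_i}) over partitions with mesh tending to zero, exists and satisfies |J_{st}(f dg)| ≤ ‖f‖_∞ ‖g‖_γ (t-s)^γ + c_{γ,κ} ‖f‖_κ ‖g‖_γ (t-s)^{γ+κ}, where c_{γ,κ} = (2^{γ+κ} - 2)^{-1}. -/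
open Set

/-- The Riemann sums `∑ f(tᵢ)(g(tᵢ₊₁) - g(tᵢ))` over partitions of `[s,t]`
converge to `I` as the mesh tends to zero. -/
def RiemannSumsTendTo (f g : ℝ → ℝ) (s t I : ℝ) : Prop :=
  ∀ ε > (0:ℝ), ∃ δ > (0:ℝ), ∀ (n : ℕ) (π : ℕ → ℝ), 0 < n → π 0 = s → π n = t →
    (∀ i < n, π i < π (i + 1)) → (∀ i < n, π (i + 1) - π i < δ) →
    |(∑ i ∈ Finset.range n, f (π i) * (g (π (i + 1)) - g (π i))) - I| < ε

namespace YoungAux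

open Finset

lemma mono_part {α : Type*} [Preorder α] {F : ℕ → α} {n : ℕ}
    (h : ∀ i < n, F i < F (i + 1)) :
    ∀ i j, i ≤ j → j ≤ n → F i ≤ F j := by
  intro i j hij hjn
  induction hij with
  | refl => exact le_rfl
  | @step j' h' ih =>
    exact le_trans (ih (by omega)) (le_of_lt (h j' (by omega)))

def S (f g : ℝ → ℝ) (π : ℕ → ℝ) (n : ℕ) : ℝ :=
  ∑ i ∈ Finset.range n, f (π i) * (g (π (i + 1)) - g (π i))

variable {s t κ γ : ℝ} {f g : ℝ → ℝ} {Kf Kg : ℝ}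

lemma pair_sum (h : ℕ → ℝ) (N : ℕ) :
    ∑ i ∈ range (2 * N), h i = ∑ i ∈ range N, (h (2 * i) + h (2 * i + 1)) := by
  induction N with
  | zero => simp
  | succ N ih =>
    rw [Finset.sum_range_succ, ← ih, show 2 * (N + 1) = (2 * N + 1) + 1 by ring,
      Finset.sum_range_succ, Finset.sum_range_succ]
    ring_nf

variable {s t κ γ : ℝ} {f g : ℝ → ℝ} {Kf Kg : ℝ}

/-- dyadic points -/

lemma pow_geom {x : ℝ} (hx : 0 ≤ x) (θ : ℝ) (k : ℕ) :
    (2:ℝ) ^ k * (x / 2 ^ k) ^ θ = x ^ θ * ((2:ℝ) ^ (1 - θ)) ^ k := by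
  have h2 : (0:ℝ) < 2 := two_pos
  rw [Real.div_rpow hx (by positivity), ← Real.rpow_natCast (2:ℝ) k,
    ← Real.rpow_natCast ((2:ℝ) ^ (1 - θ)) k, ← Real.rpow_mul h2.le,
    ← Real.rpow_mul h2.le, div_eq_mul_inv, ← Real.rpow_neg h2.le,
    show (2:ℝ) ^ ((k:ℝ)) * (x ^ θ * (2:ℝ) ^ (-((k:ℝ) * θ)))
      = x ^ θ * ((2:ℝ) ^ ((k:ℝ)) * (2:ℝ) ^ (-((k:ℝ) * θ))) from by ring,
    ← Real.rpow_add h2]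
  congr 1
  ring

noncomputable def Zc (θ : ℝ) : ℝ := ∑' k : ℕ, (((k : ℝ) + 1) ^ θ)⁻¹

lemma Zc_nonneg (θ : ℝ) : 0 ≤ Zc θ := tsum_nonneg fun k => by positivity

lemma Zc_summable {θ : ℝ} (hθ : 1 < θ) :
    Summable (fun k : ℕ => (((k : ℝ) + 1) ^ θ)⁻¹) := by
  have h := Real.summable_nat_rpow_inv.mpr hθ
  have := (summable_nat_add_iff 1).mpr h
  refine this.congr fun n => ?_
  push_cast
  ring_nf

lemma partial_le_Zc {θ : ℝ} (hθ : 1 < θ) (n : ℕ) :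
    ∑ k ∈ range n, (((k : ℝ) + 1) ^ θ)⁻¹ ≤ Zc θ :=
  Summable.sum_le_tsum (range n) (fun k _ => by positivity) (Zc_summable hθ)

variable {s t κ γ : ℝ} {f g : ℝ → ℝ} {Kf Kg : ℝ}

variable {s t κ γ : ℝ} {f g : ℝ → ℝ} {Kf Kg : ℝ}

lemma cross (hκ : 0 < κ) (hγ : 0 < γ) (hKf0 : 0 ≤ Kf) (hKg0 : 0 ≤ Kg)
    (hKf : ∀ u ∈ Icc s t, ∀ v ∈ Icc s t, |f u - f v| ≤ Kf * |u - v| ^ κ)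
    (hKg : ∀ u ∈ Icc s t, ∀ v ∈ Icc s t, |g u - g v| ≤ Kg * |u - v| ^ γ)
    {u v w : ℝ} (hu : u ∈ Icc s t) (hv : v ∈ Icc s t) (hw : w ∈ Icc s t)
    (h1 : u ≤ v) (h2 : v ≤ w) :
    |(f v - f u) * (g w - g v)| ≤ Kf * Kg * (w - u) ^ (γ + κ) := by
  have huw : (0:ℝ) ≤ w - u := by linarith
  have hf : |f v - f u| ≤ Kf * (w - u) ^ κ := by
    refine le_trans (hKf v hv u hu) ?_
    have : |v - u| = v - u := abs_of_nonneg (by linarith)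
    rw [this]
    exact mul_le_mul_of_nonneg_left
      (Real.rpow_le_rpow (by linarith) (by linarith) hκ.le) hKf0
  have hg : |g w - g v| ≤ Kg * (w - u) ^ γ := by
    refine le_trans (hKg w hw v hv) ?_
    have : |w - v| = w - v := abs_of_nonneg (by linarith)
    rw [this]
    exact mul_le_mul_of_nonneg_left
      (Real.rpow_le_rpow (by linarith) (by linarith) hγ.le) hKg0
  rw [abs_mul]
  calc |f v - f u| * |g w - g v| ≤ (Kf * (w - u) ^ κ) * (Kg * (w - u) ^ γ) := by
        apply mul_le_mul hf hg (abs_nonneg _)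
        positivity
    _ = Kf * Kg * (w - u) ^ (γ + κ) := by
        rw [Real.rpow_add' huw (by positivity)]
        ring

lemma cross_sharp (hκ : 0 < κ) (hγ : 0 < γ) (hKf0 : 0 ≤ Kf) (hKg0 : 0 ≤ Kg)
    (hKf : ∀ u ∈ Icc s t, ∀ v ∈ Icc s t, |f u - f v| ≤ Kf * |u - v| ^ κ)
    (hKg : ∀ u ∈ Icc s t, ∀ v ∈ Icc s t, |g u - g v| ≤ Kg * |u - v| ^ γ)
    {u v w : ℝ} {h : ℝ} (hpos : 0 < h)
    (hu : u ∈ Icc s t) (hv : v ∈ Icc s t) (hw : w ∈ Icc s t)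
    (h1 : v - u = h) (h2 : w - v = h) :
    |(f v - f u) * (g w - g v)| ≤ Kf * Kg * h ^ (γ + κ) := by
  rw [abs_mul]
  have hf : |f v - f u| ≤ Kf * h ^ κ := by
    have := hKf v hv u hu
    rwa [show |v - u| = h by rw [abs_of_pos (h1 ▸ hpos)]; linarith] at this
  have hg : |g w - g v| ≤ Kg * h ^ γ := by
    have := hKg w hw v hv
    rwa [show |w - v| = h by rw [abs_of_pos (h2 ▸ hpos)]; linarith] at this
  calc |f v - f u| * |g w - g v| ≤ (Kf * h ^ κ) * (Kg * h ^ γ) := by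
        apply mul_le_mul hf hg (abs_nonneg _); positivity
    _ = Kf * Kg * h ^ (γ + κ) := by
        rw [Real.rpow_add hpos]; ring

set_option maxHeartbeats 1000000 in
lemma youngA (hκ : 0 < κ) (hγ : 0 < γ) (hθ : 1 < γ + κ) (hKf0 : 0 ≤ Kf) (hKg0 : 0 ≤ Kg)
    (hKf : ∀ u ∈ Icc s t, ∀ v ∈ Icc s t, |f u - f v| ≤ Kf * |u - v| ^ κ)
    (hKg : ∀ u ∈ Icc s t, ∀ v ∈ Icc s t, |g u - g v| ≤ Kg * |u - v| ^ γ) :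
    ∀ (n : ℕ) (π : ℕ → ℝ), (∀ i < n, π i < π (i + 1)) → (∀ i ≤ n, π i ∈ Icc s t) →
      |S f g π n - f (π 0) * (g (π n) - g (π 0))|
        ≤ Kf * Kg * (2 * (π n - π 0)) ^ (γ + κ) *
            ∑ k ∈ range (n - 1), (((k : ℝ) + 1) ^ (γ + κ))⁻¹ := by
  intro n
  induction n using Nat.strong_induction_on with
  | _ n IH =>
  intro π hinc hmem
  match n with
  | 0 => simp [S]
  | 1 =>
    have : S f g π 1 = f (π 0) * (g (π 1) - g (π 0)) := by
      simp [S]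
    simp [this]
  | (m + 2) =>
    -- find index with small combined gap
    have hmono := mono_part (n := m + 2) hinc
    have hb : (0:ℝ) ≤ π (m + 2) - π 0 := by
      have := hmono 0 (m + 2) (by omega) le_rfl
      linarith
    have hsum : ∑ i ∈ range (m + 1), (π (i + 2) - π i)
        ≤ ∑ _i ∈ range (m + 1), 2 * (π (m + 2) - π 0) / (m + 1) := by
      have e1 : ∑ i ∈ range (m + 1), (π (i + 2) - π (i + 1)) = π (m + 2) - π 1 := by
        have := Finset.sum_range_sub (fun i => π (i + 1)) (m + 1)
        simpa using this
      have e2 : ∑ i ∈ range (m + 1), (π (i + 1) - π i) = π (m + 1) - π 0 :=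
        Finset.sum_range_sub π (m + 1)
      have e3 : ∑ i ∈ range (m + 1), (π (i + 2) - π i)
          = (π (m + 2) - π 1) + (π (m + 1) - π 0) := by
        rw [← e1, ← e2, ← Finset.sum_add_distrib]
        apply Finset.sum_congr rfl
        intro k _
        ring
      have h01 : π 0 ≤ π 1 := hmono 0 1 (by omega) (by omega)
      have h2' : π (m + 1) ≤ π (m + 2) := hmono (m + 1) (m + 2) (by omega) le_rfl
      rw [e3, Finset.sum_const, card_range, nsmul_eq_mul]
      have : ((m:ℝ) + 1) ≠ 0 := by positivity
      field_simp
      push_cast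
      nlinarith
    obtain ⟨i, hi, hD⟩ := Finset.exists_le_of_sum_le ⟨0, by simp⟩ hsum
    have him : i ≤ m := by have := Finset.mem_range.mp hi; omega
    -- removed partition
    set π' : ℕ → ℝ := fun x => if x ≤ i then π x else π (x + 1) with hπ'
    have hlo : ∀ k, k ≤ i → π' k = π k := fun k hk => if_pos hk
    have hhi : ∀ k, i < k → π' k = π (k + 1) := fun k hk => if_neg (by omega)
    have h0' : π' 0 = π 0 := hlo 0 (by omega)
    have hl' : π' (m + 1) = π (m + 2) := hhi (m + 1) (by omega)
    have hinc' : ∀ k < m + 1, π' k < π' (k + 1) := by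
      intro k hk
      rcases le_or_gt (k + 1) i with h1 | h1
      · rw [hlo k (by omega), hlo (k + 1) h1]
        exact hinc k (by omega)
      rcases le_or_gt k i with h2 | h2
      · have hki : k = i := by omega
        rw [hlo k h2, hhi (k + 1) (by omega), hki]
        exact lt_trans (hinc i (by omega)) (hinc (i + 1) (by omega))
      · rw [hhi k h2, hhi (k + 1) (by omega)]
        exact hinc (k + 1) (by omega)
    have hmem' : ∀ k ≤ m + 1, π' k ∈ Icc s t := by
      intro k hk
      rcases le_or_gt k i with h2 | h2
      · rw [hlo k h2]; exact hmem k (by omega)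
      · rw [hhi k h2]; exact hmem (k + 1) (by omega)
    -- sum identity
    have key : S f g π (m + 2)
        = S f g π' (m + 1) + (f (π (i + 1)) - f (π i)) * (g (π (i + 2)) - g (π (i + 1))) := by
      have split1 : S f g π (m + 2)
          = ((∑ k ∈ range i, f (π k) * (g (π (k + 1)) - g (π k)))
            + f (π i) * (g (π (i + 1)) - g (π i))
            + f (π (i + 1)) * (g (π (i + 2)) - g (π (i + 1))))
            + ∑ k ∈ Finset.Ico (i + 2) (m + 2), f (π k) * (g (π (k + 1)) - g (π k)) := by
        rw [S, ← Finset.sum_range_add_sum_Ico _ (show i + 2 ≤ m + 2 by omega),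
          Finset.sum_range_succ, Finset.sum_range_succ]
      have split2 : S f g π' (m + 1)
          = ((∑ k ∈ range i, f (π' k) * (g (π' (k + 1)) - g (π' k)))
            + f (π' i) * (g (π' (i + 1)) - g (π' i)))
            + ∑ k ∈ Finset.Ico (i + 1) (m + 1), f (π' k) * (g (π' (k + 1)) - g (π' k)) := by
        rw [S, ← Finset.sum_range_add_sum_Ico _ (show i + 1 ≤ m + 1 by omega),
          Finset.sum_range_succ]
      have e1 : ∑ k ∈ range i, f (π' k) * (g (π' (k + 1)) - g (π' k))
          = ∑ k ∈ range i, f (π k) * (g (π (k + 1)) - g (π k)) := by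
        apply Finset.sum_congr rfl
        intro k hk
        have hk' : k < i := Finset.mem_range.mp hk
        rw [hlo k (by omega), hlo (k + 1) (by omega)]
      have e2 : f (π' i) * (g (π' (i + 1)) - g (π' i))
          = f (π i) * (g (π (i + 2)) - g (π i)) := by
        rw [hlo i le_rfl, hhi (i + 1) (by omega)]
      have e3 : ∑ k ∈ Finset.Ico (i + 1) (m + 1), f (π' k) * (g (π' (k + 1)) - g (π' k))
          = ∑ k ∈ Finset.Ico (i + 2) (m + 2), f (π k) * (g (π (k + 1)) - g (π k)) := by
        rw [Finset.sum_Ico_eq_sum_range, Finset.sum_Ico_eq_sum_range]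
        have hc : m + 1 - (i + 1) = m + 2 - (i + 2) := by omega
        rw [hc]
        apply Finset.sum_congr rfl
        intro k _
        rw [hhi (i + 1 + k) (by omega), hhi (i + 1 + k + 1) (by omega)]
        have a1 : i + 1 + k + 1 = i + 2 + k := by omega
        rw [a1]
      rw [split1, split2, e1, e2, e3]
      ring
    -- conclude
    have hIH := IH (m + 1) (by omega) π' hinc' hmem'
    rw [h0', hl'] at hIH
    have hrem : |(f (π (i + 1)) - f (π i)) * (g (π (i + 2)) - g (π (i + 1)))|
        ≤ Kf * Kg * (π (i + 2) - π i) ^ (γ + κ) :=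
      cross hκ hγ hKf0 hKg0 hKf hKg (hmem i (by omega)) (hmem (i + 1) (by omega))
        (hmem (i + 2) (by omega)) (hmono i (i + 1) (by omega) (by omega))
        (hmono (i + 1) (i + 2) (by omega) (by omega))
    have hDθ : (π (i + 2) - π i) ^ (γ + κ)
        ≤ (2 * (π (m + 2) - π 0)) ^ (γ + κ) * (((m : ℝ) + 1) ^ (γ + κ))⁻¹ := by
      have hD0 : (0:ℝ) ≤ π (i + 2) - π i := by
        have := hmono i (i + 2) (by omega) (by omega); linarith
      have h1 : (π (i + 2) - π i) ^ (γ + κ) ≤ (2 * (π (m + 2) - π 0) / ((m:ℝ) + 1)) ^ (γ + κ) := by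
        exact Real.rpow_le_rpow hD0 hD (by linarith)
      refine le_trans h1 ?_
      rw [Real.div_rpow (by linarith) (by positivity), div_eq_mul_inv]
    calc |S f g π (m + 2) - f (π 0) * (g (π (m + 2)) - g (π 0))|
        ≤ |S f g π' (m + 1) - f (π 0) * (g (π (m + 2)) - g (π 0))|
          + |(f (π (i + 1)) - f (π i)) * (g (π (i + 2)) - g (π (i + 1)))| := by
          rw [key]
          exact (abs_add_le _ _).trans_eq' (by ring_nf)
      _ ≤ Kf * Kg * (2 * (π (m + 2) - π 0)) ^ (γ + κ) *
            (∑ k ∈ range m, (((k : ℝ) + 1) ^ (γ + κ))⁻¹)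
          + Kf * Kg * (2 * (π (m + 2) - π 0)) ^ (γ + κ) * (((m : ℝ) + 1) ^ (γ + κ))⁻¹ := by
          have h2 : Kf * Kg * (π (i + 2) - π i) ^ (γ + κ)
              ≤ Kf * Kg * ((2 * (π (m + 2) - π 0)) ^ (γ + κ) * (((m : ℝ) + 1) ^ (γ + κ))⁻¹) :=
            mul_le_mul_of_nonneg_left hDθ (by positivity)
          have := hIH
          simp only [Nat.add_sub_cancel] at this ⊢
          nlinarith [this, hrem.trans h2]
      _ = Kf * Kg * (2 * (π (m + 2) - π 0)) ^ (γ + κ) *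
            ∑ k ∈ range (m + 2 - 1), (((k : ℝ) + 1) ^ (γ + κ))⁻¹ := by
          have : m + 2 - 1 = m + 1 := by omega
          rw [this, Finset.sum_range_succ]
          push_cast
          ring

lemma youngA' (hκ : 0 < κ) (hγ : 0 < γ) (hθ : 1 < γ + κ) (hKf0 : 0 ≤ Kf) (hKg0 : 0 ≤ Kg)
    (hKf : ∀ u ∈ Icc s t, ∀ v ∈ Icc s t, |f u - f v| ≤ Kf * |u - v| ^ κ)
    (hKg : ∀ u ∈ Icc s t, ∀ v ∈ Icc s t, |g u - g v| ≤ Kg * |u - v| ^ γ)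
    (n : ℕ) (π : ℕ → ℝ) (hinc : ∀ i < n, π i < π (i + 1)) (hmem : ∀ i ≤ n, π i ∈ Icc s t) :
    |S f g π n - f (π 0) * (g (π n) - g (π 0))|
      ≤ (Kf * Kg * (2:ℝ) ^ (γ + κ) * Zc (γ + κ)) * (π n - π 0) ^ (γ + κ) := by
  have hb : (0:ℝ) ≤ π n - π 0 := by
    have := mono_part hinc 0 n (by omega) le_rfl; linarith
  refine le_trans (youngA hκ hγ hθ hKf0 hKg0 hKf hKg n π hinc hmem) ?_
  rw [Real.mul_rpow (by norm_num) hb]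
  calc Kf * Kg * ((2:ℝ) ^ (γ + κ) * (π n - π 0) ^ (γ + κ)) *
        ∑ k ∈ range (n - 1), (((k : ℝ) + 1) ^ (γ + κ))⁻¹
      ≤ Kf * Kg * ((2:ℝ) ^ (γ + κ) * (π n - π 0) ^ (γ + κ)) * Zc (γ + κ) := by
        apply mul_le_mul_of_nonneg_left (partial_le_Zc hθ _)
        positivity
    _ = (Kf * Kg * (2:ℝ) ^ (γ + κ) * Zc (γ + κ)) * (π n - π 0) ^ (γ + κ) := by ring

lemma refEst (hκ : 0 < κ) (hγ : 0 < γ) (hθ : 1 < γ + κ) (hKf0 : 0 ≤ Kf) (hKg0 : 0 ≤ Kg)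
    (hKf : ∀ u ∈ Icc s t, ∀ v ∈ Icc s t, |f u - f v| ≤ Kf * |u - v| ^ κ)
    (hKg : ∀ u ∈ Icc s t, ∀ v ∈ Icc s t, |g u - g v| ≤ Kg * |u - v| ^ γ)
    (σ : ℕ → ℝ) (p : ℕ) (hσinc : ∀ i < p, σ i < σ (i + 1)) (hσmem : ∀ i ≤ p, σ i ∈ Icc s t)
    (ρ : ℕ → ℝ) (n : ℕ) (e : ℕ → ℕ) (he0 : e 0 = 0) (hen : e n = p)
    (hee : ∀ j < n, e j < e (j + 1)) (hre : ∀ j ≤ n, ρ j = σ (e j)) :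
    |S f g σ p - S f g ρ n|
      ≤ (Kf * Kg * (2:ℝ) ^ (γ + κ) * Zc (γ + κ)) * ∑ j ∈ range n, (ρ (j + 1) - ρ j) ^ (γ + κ) := by
  have emono := mono_part hee
  have hblocks : ∀ q ≤ n, ∑ k ∈ range (e q), f (σ k) * (g (σ (k + 1)) - g (σ k))
      = ∑ j ∈ range q, ∑ k ∈ Finset.Ico (e j) (e (j + 1)), f (σ k) * (g (σ (k + 1)) - g (σ k)) := by
    intro q hq
    induction q with
    | zero => simp [he0]
    | succ q ih =>
      rw [Finset.sum_range_succ, ← ih (by omega),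
        Finset.sum_range_add_sum_Ico _ (emono q (q + 1) (by omega) hq)]
  have hS : S f g σ p = ∑ j ∈ range n,
      ∑ k ∈ Finset.Ico (e j) (e (j + 1)), f (σ k) * (g (σ (k + 1)) - g (σ k)) := by
    rw [S, ← hen, hblocks n le_rfl]
  have hSρ : S f g ρ n = ∑ j ∈ range n, f (ρ j) * (g (ρ (j + 1)) - g (ρ j)) := rfl
  rw [hS, hSρ, ← Finset.sum_sub_distrib]
  refine le_trans (Finset.abs_sum_le_sum_abs _ _) ?_
  rw [Finset.mul_sum]
  apply Finset.sum_le_sum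
  intro j hj
  have hjn : j < n := Finset.mem_range.mp hj
  set a := e j with ha
  set b := e (j + 1) with hb
  have hab : a ≤ b := (hee j hjn).le
  have hbp : b ≤ p := by rw [← hen]; exact emono (j + 1) n (by omega) le_rfl
  have hblock : ∑ k ∈ Finset.Ico a b, f (σ k) * (g (σ (k + 1)) - g (σ k))
      = S f g (fun k => σ (a + k)) (b - a) := by
    rw [S, Finset.sum_Ico_eq_sum_range]
    simp [Nat.add_assoc]
  have happ := youngA' hκ hγ hθ hKf0 hKg0 hKf hKg (b - a) (fun k => σ (a + k))
    (fun i hi => by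
      have h1 : a + i < p := by omega
      have := hσinc (a + i) h1
      simpa [← Nat.add_assoc] using this)
    (fun i hi => hσmem (a + i) (by omega))
  have hrw1 : (fun k => σ (a + k)) 0 = ρ j := by simp [hre j hjn.le, ha]
  have hrw2 : (fun k => σ (a + k)) (b - a) = ρ (j + 1) := by
    have : a + (b - a) = b := by omega
    simp only [this]
    exact (hre (j + 1) (by omega)).symm
  rw [show σ (a + 0) = ρ j from hrw1, show σ (a + (b - a)) = ρ (j + 1) from hrw2] at happ
  rw [hblock]
  exact happ

lemma gapSum_le {θ δ : ℝ} (hθ : 1 < θ) (hδ0 : 0 < δ) (ρ : ℕ → ℝ) (n : ℕ)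
    (hinc : ∀ j < n, ρ j < ρ (j + 1)) (hmesh : ∀ j < n, ρ (j + 1) - ρ j < δ) :
    ∑ j ∈ range n, (ρ (j + 1) - ρ j) ^ θ ≤ δ ^ (θ - 1) * (ρ n - ρ 0) := by
  have key : ∀ j ∈ range n, (ρ (j + 1) - ρ j) ^ θ ≤ δ ^ (θ - 1) * (ρ (j + 1) - ρ j) := by
    intro j hj
    have hjn : j < n := mem_range.mp hj
    have hx : (0:ℝ) < ρ (j + 1) - ρ j := by have := hinc j hjn; linarith
    have : (ρ (j + 1) - ρ j) ^ θ = (ρ (j + 1) - ρ j) ^ (θ - 1) * (ρ (j + 1) - ρ j) := by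
      rw [show θ = (θ - 1) + 1 by ring, Real.rpow_add hx, Real.rpow_one]
      ring_nf
    rw [this]
    exact mul_le_mul_of_nonneg_right
      (Real.rpow_le_rpow hx.le (hmesh j hjn).le (by linarith)) hx.le
  refine le_trans (Finset.sum_le_sum key) ?_
  rw [← Finset.mul_sum, Finset.sum_range_sub ρ]

lemma merge {s t : ℝ} (π : ℕ → ℝ) (n : ℕ) (ρ : ℕ → ℝ) (m : ℕ)
    (hπ0 : π 0 = s) (hπn : π n = t) (hρ0 : ρ 0 = s) (hρm : ρ m = t)
    (hπmem : ∀ i ≤ n, π i ∈ Icc s t) (hρmem : ∀ i ≤ m, ρ i ∈ Icc s t) :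
    ∃ (σ : ℕ → ℝ) (p : ℕ) (e₁ e₂ : ℕ → ℕ),
      (∀ i < p, σ i < σ (i + 1)) ∧ (∀ i ≤ p, σ i ∈ Icc s t) ∧
      e₁ 0 = 0 ∧ e₁ n = p ∧ (∀ j < n, π j < π (j + 1) → e₁ j < e₁ (j + 1)) ∧
        (∀ j ≤ n, π j = σ (e₁ j)) ∧
      e₂ 0 = 0 ∧ e₂ m = p ∧ (∀ j < m, ρ j < ρ (j + 1) → e₂ j < e₂ (j + 1)) ∧
        (∀ j ≤ m, ρ j = σ (e₂ j)) := by
  classical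
  set F : Finset ℝ := (range (n + 1)).image π ∪ (range (m + 1)).image ρ with hF
  have hsF : s ∈ F := by
    apply Finset.mem_union_left
    exact Finset.mem_image.mpr ⟨0, by simp, hπ0⟩
  have htF : t ∈ F := by
    apply Finset.mem_union_left
    exact Finset.mem_image.mpr ⟨n, by simp, hπn⟩
  have hπF : ∀ j ≤ n, π j ∈ F := fun j hj =>
    Finset.mem_union_left _ (Finset.mem_image.mpr ⟨j, by simpa using Nat.lt_succ_of_le hj, rfl⟩)
  have hρF : ∀ j ≤ m, ρ j ∈ F := fun j hj =>
    Finset.mem_union_right _ (Finset.mem_image.mpr ⟨j, by simpa using Nat.lt_succ_of_le hj, rfl⟩)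
  have hmemF : ∀ x ∈ F, x ∈ Icc s t := by
    intro x hx
    rcases Finset.mem_union.mp hx with h | h <;> obtain ⟨j, hj, rfl⟩ := Finset.mem_image.mp h
    · exact hπmem j (by simpa using Nat.lt_succ_iff.mp (mem_range.mp hj))
    · exact hρmem j (by simpa using Nat.lt_succ_iff.mp (mem_range.mp hj))
  set c := F.card with hc
  have hc0 : 0 < c := Finset.card_pos.mpr ⟨s, hsF⟩
  set oi := F.orderIsoOfFin (rfl : F.card = c) with hoi
  set σ : ℕ → ℝ := fun i => if h : i < c then (oi ⟨i, h⟩ : ℝ) else t with hσ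
  have hσval : ∀ (i : ℕ) (h : i < c), σ i = (oi ⟨i, h⟩ : ℝ) := fun i h => dif_pos h
  -- index of an element
  have hIccF : ∀ i : Fin c, (oi i : ℝ) ∈ Icc s t := fun i => hmemF _ (oi i).2
  set p := ((oi.symm ⟨t, htF⟩ : Fin c) : ℕ) with hp
  have hpc : p < c := (oi.symm ⟨t, htF⟩).isLt
  have htop : ∀ i : Fin c, (i : ℕ) ≤ p := by
    intro i
    have h1 : oi i ≤ ⟨t, htF⟩ := by
      rw [← Subtype.coe_le_coe]
      exact (hIccF i).2
    have := oi.symm.monotone h1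
    have h2 : i ≤ oi.symm ⟨t, htF⟩ := by simpa using this
    exact Fin.le_def.mp h2
  have hbot : ∀ i : Fin c, ((oi.symm ⟨s, hsF⟩ : Fin c) : ℕ) ≤ (i : ℕ) := by
    intro i
    have h1 : (⟨s, hsF⟩ : F) ≤ oi i := by
      rw [← Subtype.coe_le_coe]
      exact (hIccF i).1
    have := oi.symm.monotone h1
    simpa using this
  have hσinc : ∀ i < p, σ i < σ (i + 1) := by
    intro i hi
    have h1 : i < c := lt_trans hi hpc
    have h2 : i + 1 < c := lt_of_le_of_lt hi hpc
    rw [hσval i h1, hσval (i + 1) h2, Subtype.coe_lt_coe]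
    exact oi.strictMono (by simp [Fin.lt_def])
  have hσmem : ∀ i ≤ p, σ i ∈ Icc s t := by
    intro i hi
    have h1 : i < c := lt_of_le_of_lt hi hpc
    rw [hσval i h1]
    exact hIccF _
  -- generic embedding constructor
  have embed : ∀ (τ : ℕ → ℝ) (q : ℕ), τ 0 = s → τ q = t → (∀ j ≤ q, τ j ∈ F) →
      ∃ e : ℕ → ℕ, e 0 = 0 ∧ e q = p ∧ (∀ j < q, τ j < τ (j + 1) → e j < e (j + 1)) ∧
        (∀ j ≤ q, τ j = σ (e j)) := by
    intro τ q hτ0 hτq hτF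
    refine ⟨fun j => if h : τ j ∈ F then ((oi.symm ⟨τ j, h⟩ : Fin c) : ℕ) else 0, ?_, ?_, ?_, ?_⟩
    · dsimp only
      rw [dif_pos (hτF 0 (by omega))]
      have : (⟨τ 0, hτF 0 (by omega)⟩ : F) = ⟨s, hsF⟩ := Subtype.ext hτ0
      rw [this]
      have h1 := hbot (oi.symm ⟨s, hsF⟩)
      have h2 := hbot ⟨0, hc0⟩
      have h3 : ((⟨0, hc0⟩ : Fin c) : ℕ) = 0 := rfl
      omega
    · dsimp only
      rw [dif_pos (hτF q le_rfl)]
      have : (⟨τ q, hτF q le_rfl⟩ : F) = ⟨t, htF⟩ := Subtype.ext hτq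
      rw [this]
    · intro j hj hlt
      dsimp only
      rw [dif_pos (hτF j hj.le), dif_pos (hτF (j + 1) hj)]
      have h1 : (⟨τ j, hτF j hj.le⟩ : F) < ⟨τ (j + 1), hτF (j + 1) hj⟩ := by
        rw [← Subtype.coe_lt_coe]; exact hlt
      have := oi.symm.strictMono h1
      simpa [Fin.lt_def] using this
    · intro j hj
      dsimp only
      rw [dif_pos (hτF j hj)]
      have h1 : ((oi.symm ⟨τ j, hτF j hj⟩ : Fin c) : ℕ) < c := (oi.symm _).isLt
      rw [hσval _ h1]
      have : (⟨((oi.symm ⟨τ j, hτF j hj⟩ : Fin c) : ℕ), h1⟩ : Fin c)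
          = oi.symm ⟨τ j, hτF j hj⟩ := by
        apply Fin.ext; rfl
      rw [this, OrderIso.apply_symm_apply]
  obtain ⟨e₁, h₁⟩ := embed π n hπ0 hπn hπF
  obtain ⟨e₂, h₂⟩ := embed ρ m hρ0 hρm hρF
  exact ⟨σ, p, e₁, e₂, hσinc, hσmem, h₁.1, h₁.2.1, h₁.2.2.1, h₁.2.2.2,
    h₂.1, h₂.2.1, h₂.2.2.1, h₂.2.2.2⟩

noncomputable def dy (s t : ℝ) (k i : ℕ) : ℝ := s + (t - s) * i / 2 ^ k

lemma dy_zero (k : ℕ) : dy s t k 0 = s := by simp [dy]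

lemma dy_last (k : ℕ) : dy s t k (2 ^ k) = t := by
  have h : ((2:ℝ)) ^ k ≠ 0 := by positivity
  simp only [dy]
  push_cast
  rw [mul_div_assoc, div_self h]
  ring

lemma dy_gap (k i : ℕ) : dy s t k (i + 1) - dy s t k i = (t - s) / 2 ^ k := by
  simp only [dy]
  push_cast
  ring

lemma dy_half (k i : ℕ) : dy s t (k + 1) (2 * i) = dy s t k i := by
  simp only [dy]
  have h : ((2:ℝ)) ^ k ≠ 0 := by positivity
  field_simp
  push_cast
  ring

lemma dy_inc (hst : s < t) (k : ℕ) : ∀ i, dy s t k i < dy s t k (i + 1) := by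
  intro i
  have := dy_gap (s := s) (t := t) k i
  have hts : (0:ℝ) < t - s := by linarith
  have h2 : (0:ℝ) < (t - s) / 2 ^ k := by positivity
  linarith

lemma dy_mem (hst : s < t) (k : ℕ) : ∀ i ≤ 2 ^ k, dy s t k i ∈ Icc s t := by
  intro i hi
  have h1 : ∀ a b : ℕ, a ≤ b → dy s t k a ≤ dy s t k b := by
    intro a b hab
    have : dy s t k b - dy s t k a = (t - s) * (b - a) / 2 ^ k := by
      simp only [dy]; push_cast; ring
    have hba : (0:ℝ) ≤ (b:ℝ) - a := by
      have : (a:ℝ) ≤ (b:ℝ) := Nat.cast_le.mpr hab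
      linarith
    have hq : (0:ℝ) ≤ (t - s) * ((b:ℝ) - a) / 2 ^ k := by
      have hts : (0:ℝ) < t - s := by linarith
      positivity
    linarith
  constructor
  · have := h1 0 i (by omega); rwa [dy_zero] at this
  · have := h1 i (2 ^ k) hi; rwa [dy_last] at this

lemma dyadic_step (hst : s < t) (hκ : 0 < κ) (hγ : 0 < γ) (hKf0 : 0 ≤ Kf) (hKg0 : 0 ≤ Kg)
    (hKf : ∀ u ∈ Icc s t, ∀ v ∈ Icc s t, |f u - f v| ≤ Kf * |u - v| ^ κ)
    (hKg : ∀ u ∈ Icc s t, ∀ v ∈ Icc s t, |g u - g v| ≤ Kg * |u - v| ^ γ)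
    (k : ℕ) :
    |S f g (dy s t (k + 1)) (2 ^ (k + 1)) - S f g (dy s t k) (2 ^ k)|
      ≤ (2:ℝ) ^ k * (Kf * Kg * ((t - s) / 2 ^ (k + 1)) ^ (γ + κ)) := by
  set D := dy s t (k + 1) with hD
  set d := dy s t k with hd
  have hpair : S f g D (2 ^ (k + 1))
      = ∑ i ∈ range (2 ^ k),
          (f (D (2 * i)) * (g (D (2 * i + 1)) - g (D (2 * i)))
            + f (D (2 * i + 1)) * (g (D (2 * i + 1 + 1)) - g (D (2 * i + 1)))) := by
    rw [S, pow_succ, mul_comm ((2:ℕ) ^ k) 2, pair_sum]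
  have hdiff : S f g D (2 ^ (k + 1)) - S f g d (2 ^ k)
      = ∑ i ∈ range (2 ^ k),
          ((f (D (2 * i + 1)) - f (d i)) * (g (d (i + 1)) - g (D (2 * i + 1)))) := by
    rw [hpair, S, ← Finset.sum_sub_distrib]
    apply Finset.sum_congr rfl
    intro i _
    have e1 : D (2 * i) = d i := dy_half k i
    have e2 : D (2 * i + 1 + 1) = d (i + 1) := by
      have : 2 * i + 1 + 1 = 2 * (i + 1) := by ring
      rw [this]; exact dy_half k (i + 1)
    rw [e1, e2]
    ring
  rw [hdiff]
  refine le_trans (Finset.abs_sum_le_sum_abs _ _) ?_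
  have hbound : ∀ i ∈ range (2 ^ k),
      |(f (D (2 * i + 1)) - f (d i)) * (g (d (i + 1)) - g (D (2 * i + 1)))|
        ≤ Kf * Kg * ((t - s) / 2 ^ (k + 1)) ^ (γ + κ) := by
    intro i hi
    have hik : i < 2 ^ k := mem_range.mp hi
    have hpos : (0:ℝ) < (t - s) / 2 ^ (k + 1) := by
      have : (0:ℝ) < t - s := by linarith
      positivity
    have hmem1 : d i ∈ Icc s t := dy_mem hst k i (by omega)
    have hmem3 : d (i + 1) ∈ Icc s t := dy_mem hst k (i + 1) (by omega)
    have hmem2 : D (2 * i + 1) ∈ Icc s t := by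
      apply dy_mem hst (k + 1) (2 * i + 1)
      have : 2 * i + 1 < 2 * 2 ^ k := by omega
      rw [pow_succ]
      omega
    have g1 : D (2 * i + 1) - d i = (t - s) / 2 ^ (k + 1) := by
      have := dy_gap (s := s) (t := t) (k + 1) (2 * i)
      rwa [dy_half k i] at this
    have g2 : d (i + 1) - D (2 * i + 1) = (t - s) / 2 ^ (k + 1) := by
      have h3 := dy_gap (s := s) (t := t) (k + 1) (2 * i + 1)
      rw [show 2 * i + 1 + 1 = 2 * (i + 1) from by ring, dy_half k (i + 1)] at h3
      exact h3
    exact cross_sharp hκ hγ hKf0 hKg0 hKf hKg hpos hmem1 hmem2 hmem3 g1 g2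
  refine le_trans (Finset.sum_le_sum hbound) ?_
  rw [Finset.sum_const, card_range, nsmul_eq_mul]
  push_cast
  exact le_refl _

end YoungAux

open YoungAux in
theorem young_integral_exists_and_bound
    (s t κ γ : ℝ) (hst : s < t) (hκ : κ ∈ Set.Ioo (0:ℝ) 1) (hγ : γ ∈ Set.Ioo (0:ℝ) 1)
    (hκγ : 1 < κ + γ)
    (f g : ℝ → ℝ) (Cf Kf Kg : ℝ)
    (hCf : ∀ u ∈ Set.Icc s t, |f u| ≤ Cf)
    (hKf : ∀ u ∈ Set.Icc s t, ∀ v ∈ Set.Icc s t, |f u - f v| ≤ Kf * |u - v| ^ κ)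
    (hKg : ∀ u ∈ Set.Icc s t, ∀ v ∈ Set.Icc s t, |g u - g v| ≤ Kg * |u - v| ^ γ) :
    ∃ I : ℝ, RiemannSumsTendTo f g s t I ∧
      |I| ≤ Cf * Kg * (t - s) ^ γ + (2 ^ (γ + κ) - 2)⁻¹ * Kf * Kg * (t - s) ^ (γ + κ) := by
  classical
  obtain ⟨hκ0, hκ1⟩ := hκ
  obtain ⟨hγ0, hγ1⟩ := hγ
  have hθ : 1 < γ + κ := by linarith
  have hts : (0:ℝ) < t - s := by linarith
  have hsI : s ∈ Set.Icc s t := ⟨le_rfl, hst.le⟩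
  have htI : t ∈ Set.Icc s t := ⟨hst.le, le_rfl⟩
  -- nonnegativity of the constants
  have habs : |t - s| = t - s := abs_of_pos hts
  have hKg0 : 0 ≤ Kg := by
    have h1 : (0:ℝ) < |t - s| ^ γ := Real.rpow_pos_of_pos (by rw [habs]; exact hts) γ
    have h2 : (0:ℝ) ≤ Kg * |t - s| ^ γ := le_trans (abs_nonneg _) (hKg t htI s hsI)
    nlinarith
  have hKf0 : 0 ≤ Kf := by
    have h1 : (0:ℝ) < |t - s| ^ κ := Real.rpow_pos_of_pos (by rw [habs]; exact hts) κ
    have h2 : (0:ℝ) ≤ Kf * |t - s| ^ κ := le_trans (abs_nonneg _) (hKf t htI s hsI)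
    nlinarith
  have hCf0 : 0 ≤ Cf := le_trans (abs_nonneg _) (hCf s hsI)
  -- the dyadic Riemann sums
  set Sd : ℕ → ℝ := fun k => S f g (dy s t k) (2 ^ k) with hSd
  set r : ℝ := (2:ℝ) ^ (1 - (γ + κ)) with hrdef
  set C : ℝ := Kf * Kg * (t - s) ^ (γ + κ) * (2:ℝ) ^ (-(γ + κ)) with hCdef
  have hr1 : r < 1 := Real.rpow_lt_one_of_one_lt_of_neg one_lt_two (by linarith)
  have hr0 : 0 ≤ r := (Real.rpow_pos_of_pos two_pos _).le
  have h2r : r = 2 * (2:ℝ) ^ (-(γ + κ)) := by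
    rw [hrdef, show 1 - (γ + κ) = 1 + -(γ + κ) by ring, Real.rpow_add two_pos,
      Real.rpow_one]
  have hstep : ∀ k, dist (Sd k) (Sd (k + 1)) ≤ C * r ^ k := by
    intro k
    rw [Real.dist_eq, abs_sub_comm]
    refine le_trans (dyadic_step hst hκ0 hγ0 hKf0 hKg0 hKf hKg k) (le_of_eq ?_)
    have hpg := pow_geom (x := t - s) hts.le (γ + κ) (k + 1)
    rw [hCdef, hrdef]
    rw [hrdef] at h2r
    linear_combination (Kf * Kg / 2) * hpg
      + (Kf * Kg * (t - s) ^ (γ + κ) * ((2:ℝ) ^ (1 - (γ + κ))) ^ k / 2) * h2r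
  have hcauchy : CauchySeq Sd := cauchySeq_of_le_geometric r C hr1 hstep
  obtain ⟨I, hI⟩ := cauchySeq_tendsto_of_complete hcauchy
  have hS0 : Sd 0 = f s * (g t - g s) := by
    have e1 : dy s t 0 1 = t := by
      have := dy_last (s := s) (t := t) 0
      simpa using this
    simp [hSd, S, dy_zero, e1]
  refine ⟨I, ?_, ?_⟩
  · -- Riemann sums tend to I
    intro ε hε
    set Mc : ℝ := Kf * Kg * (2:ℝ) ^ (γ + κ) * Zc (γ + κ) with hMc
    have hMc0 : 0 ≤ Mc := by
      have := Zc_nonneg (γ + κ)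
      have h2 : (0:ℝ) ≤ (2:ℝ) ^ (γ + κ) := (Real.rpow_pos_of_pos two_pos _).le
      positivity
    set c : ℝ := Mc * (t - s) + 1 with hc
    have hc0 : (0:ℝ) < c := by nlinarith
    have hδ0 : (0:ℝ) < (ε / c) ^ ((γ + κ - 1)⁻¹) :=
      Real.rpow_pos_of_pos (div_pos hε hc0) _
    refine ⟨(ε / c) ^ ((γ + κ - 1)⁻¹), hδ0, ?_⟩
    intro n π hn hπ0 hπn hπinc hπmesh
    set δ : ℝ := (ε / c) ^ ((γ + κ - 1)⁻¹) with hδ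
    have hπmem : ∀ i ≤ n, π i ∈ Set.Icc s t := by
      intro i hi
      constructor
      · rw [← hπ0]; exact mono_part hπinc 0 i (by omega) hi
      · rw [← hπn]; exact mono_part hπinc i n hi le_rfl
    have hkey : ∀ k : ℕ, |S f g π n - Sd k|
        ≤ Mc * δ ^ (γ + κ - 1) * (t - s) + Mc * (t - s) ^ (γ + κ) * r ^ k := by
      intro k
      obtain ⟨σ, p, e₁, e₂, hσinc, hσmem, he10, he1n, he1inc, he1eq,
        he20, he2n, he2inc, he2eq⟩ :=
        merge π n (dy s t k) (2 ^ k) hπ0 hπn (dy_zero k) (dy_last k) hπmem (dy_mem hst k)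
      have r1 := refEst hκ0 hγ0 hθ hKf0 hKg0 hKf hKg σ p hσinc hσmem π n e₁ he10 he1n
        (fun j hj => he1inc j hj (hπinc j hj)) he1eq
      have r2 := refEst hκ0 hγ0 hθ hKf0 hKg0 hKf hKg σ p hσinc hσmem (dy s t k) (2 ^ k)
        e₂ he20 he2n (fun j hj => he2inc j hj (dy_inc hst k j)) he2eq
      have b1 : |S f g σ p - S f g π n| ≤ Mc * (δ ^ (γ + κ - 1) * (t - s)) := by
        refine le_trans r1 ?_
        rw [← hMc]
        apply mul_le_mul_of_nonneg_left _ hMc0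
        have := gapSum_le (θ := γ + κ) hθ hδ0 π n hπinc hπmesh
        rwa [hπn, hπ0] at this
      have b2 : |S f g σ p - Sd k| ≤ Mc * ((t - s) ^ (γ + κ) * r ^ k) := by
        refine le_trans r2 ?_
        rw [← hMc]
        apply mul_le_mul_of_nonneg_left _ hMc0
        have hsum : ∑ j ∈ Finset.range (2 ^ k),
            (dy s t k (j + 1) - dy s t k j) ^ (γ + κ)
            = (2:ℝ) ^ k * ((t - s) / 2 ^ k) ^ (γ + κ) := by
          rw [Finset.sum_congr rfl (fun j _ => by rw [dy_gap]),
            Finset.sum_const, Finset.card_range, nsmul_eq_mul]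
          push_cast
          ring
        rw [hsum, pow_geom hts.le, hrdef]
      have tri : S f g π n - Sd k = -(S f g σ p - S f g π n) + (S f g σ p - Sd k) := by
        ring
      calc |S f g π n - Sd k| ≤ |S f g σ p - S f g π n| + |S f g σ p - Sd k| := by
            rw [tri]
            exact le_trans (abs_add_le _ _) (by rw [abs_neg])
        _ ≤ Mc * (δ ^ (γ + κ - 1) * (t - s)) + Mc * ((t - s) ^ (γ + κ) * r ^ k) :=
            add_le_add b1 b2
        _ = Mc * δ ^ (γ + κ - 1) * (t - s) + Mc * (t - s) ^ (γ + κ) * r ^ k := by ring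
    have hlim1 : Filter.Tendsto (fun k => |S f g π n - Sd k|) Filter.atTop
        (nhds |S f g π n - I|) := (Filter.Tendsto.sub tendsto_const_nhds hI).abs
    have hlim2 : Filter.Tendsto
        (fun k : ℕ => Mc * δ ^ (γ + κ - 1) * (t - s) + Mc * (t - s) ^ (γ + κ) * r ^ k)
        Filter.atTop (nhds (Mc * δ ^ (γ + κ - 1) * (t - s) + Mc * (t - s) ^ (γ + κ) * 0)) := by
      exact Filter.Tendsto.add tendsto_const_nhds
        ((tendsto_pow_atTop_nhds_zero_of_lt_one hr0 hr1).const_mul _)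
    have hfin : |S f g π n - I| ≤ Mc * δ ^ (γ + κ - 1) * (t - s) :=
      le_of_tendsto_of_tendsto' hlim1 hlim2 hkey |>.trans_eq (by ring)
    have hδval : δ ^ (γ + κ - 1) = ε / c := by
      rw [hδ, ← Real.rpow_mul (div_pos hε hc0).le,
        inv_mul_cancel₀ (ne_of_gt (by linarith : (0:ℝ) < γ + κ - 1)), Real.rpow_one]
    have hlt : Mc * (ε / c) * (t - s) < ε := by
      have h1 : Mc * (t - s) / c < 1 := (div_lt_one hc0).mpr (by rw [hc]; linarith)
      calc Mc * (ε / c) * (t - s) = ε * (Mc * (t - s) / c) := by ring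
        _ < ε * 1 := by
            apply mul_lt_mul_of_pos_left h1 hε
        _ = ε := mul_one ε
    have : |S f g π n - I| < ε := by
      rw [hδval] at hfin
      calc |S f g π n - I| ≤ Mc * (ε / c) * (t - s) := by
            refine le_trans hfin (le_of_eq ?_); ring
        _ < ε := hlt
    exact this
  · -- the bound
    have hdist := dist_le_of_le_geometric_of_tendsto₀ r C hr1 hstep hI
    have h2gt : (2:ℝ) < (2:ℝ) ^ (γ + κ) := by
      have := Real.rpow_lt_rpow_of_exponent_lt one_lt_two hθ
      rwa [Real.rpow_one] at this
    have hCr : C / (1 - r) = Kf * Kg * (t - s) ^ (γ + κ) * ((2:ℝ) ^ (γ + κ) - 2)⁻¹ := by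
      have hne1 : (1:ℝ) - r ≠ 0 := by linarith [hr1]
      have hne2 : (2:ℝ) ^ (γ + κ) - 2 ≠ 0 := by linarith
      have e1 : (2:ℝ) ^ (γ + κ) * (2:ℝ) ^ (-(γ + κ)) = 1 := by
        rw [← Real.rpow_add two_pos, show γ + κ + -(γ + κ) = 0 by ring, Real.rpow_zero]
      have hne3 : (2:ℝ) ^ (-(γ + κ)) ≠ 0 := ne_of_gt (Real.rpow_pos_of_pos two_pos _)
      have e2 : 1 - r = ((2:ℝ) ^ (γ + κ) - 2) * (2:ℝ) ^ (-(γ + κ)) := by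
        rw [h2r]
        linear_combination -e1
      rw [hCdef, e2, mul_div_mul_right _ _ hne3, div_eq_mul_inv]
    have habsI : |I| ≤ |Sd 0| + |Sd 0 - I| := by
      have h1 := abs_sub_abs_le_abs_sub I (Sd 0)
      have h2 : |I - Sd 0| = |Sd 0 - I| := abs_sub_comm _ _
      linarith
    have hSd0 : |Sd 0| ≤ Cf * Kg * (t - s) ^ γ := by
      rw [hS0, abs_mul]
      have hgb : |g t - g s| ≤ Kg * (t - s) ^ γ := by
        have := hKg t htI s hsI
        rwa [habs] at this
      calc |f s| * |g t - g s| ≤ Cf * (Kg * (t - s) ^ γ) :=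
            mul_le_mul (hCf s hsI) hgb (abs_nonneg _) hCf0
        _ = Cf * Kg * (t - s) ^ γ := by ring
    have hdist' : |Sd 0 - I| ≤ Kf * Kg * (t - s) ^ (γ + κ) * ((2:ℝ) ^ (γ + κ) - 2)⁻¹ := by
      rw [← hCr]
      rw [Real.dist_eq] at hdist
      exact hdist
    calc |I| ≤ |Sd 0| + |Sd 0 - I| := habsI
      _ ≤ Cf * Kg * (t - s) ^ γ + Kf * Kg * (t - s) ^ (γ + κ) * ((2:ℝ) ^ (γ + κ) - 2)⁻¹ :=
          add_le_add hSd0 hdist'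
      _ = Cf * Kg * (t - s) ^ γ + (2 ^ (γ + κ) - 2)⁻¹ * Kf * Kg * (t - s) ^ (γ + κ) := by
          ring
end

section
/- Let β ∈ (0,1), A < 0, and let h : ℝ → ℝ satisfy |h(x)| ≤ C|x| for all |x| < δ₀ with A + C < 0 (hypothesis (H2)). If 0 < x₀ < δ₀ and X is a continuous solution of X(t) = x₀ + (1/Γ(β)) ∫_0^t (t-s)^{β-1} [A X(s) + h(X(s))] ds on [0,∞), then X(t) > 0 for all t ≥ 0. -/
open Set MeasureTheory intervalIntegral

theorem solution_positive
    (β A C δ₀ x₀ : ℝ) (hβ : β ∈ Set.Ioo (0:ℝ) 1) (hA : A < 0)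
    (hC : 0 < C) (hAC : A + C < 0) (hδ₀ : 0 < δ₀)
    (h : ℝ → ℝ) (hh : ∀ x : ℝ, |x| < δ₀ → |h x| ≤ C * |x|)
    (hx₀ : 0 < x₀) (hx₀' : x₀ < δ₀)
    (X : ℝ → ℝ) (hX : ContinuousOn X (Set.Ici 0))
    (heq : ∀ t ∈ Set.Ici (0:ℝ),
      X t = x₀ + (1 / Real.Gamma β) *
        ∫ s in (0:ℝ)..t, (t - s) ^ (β - 1) * (A * X s + h (X s))) :
    ∀ t ∈ Set.Ici (0:ℝ), 0 < X t := by
  obtain ⟨hβ0, hβ1⟩ := hβ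
  have hΓ : 0 < Real.Gamma β := Real.Gamma_pos_of_pos hβ0
  set L : ℝ := -A + C with hLdef
  have hLpos : 0 < L := by rw [hLdef]; linarith
  set g : ℝ → ℝ := fun s => A * X s + h (X s) with hgdef
  have heq' : ∀ t ∈ Set.Ici (0:ℝ), X t = x₀ + (1 / Real.Gamma β) *
      ∫ s in (0:ℝ)..t, (t - s) ^ (β - 1) * g s := by
    intro t ht
    simp only [hgdef]
    exact heq t ht
  have hX0 : X 0 = x₀ := by simpa using heq' 0 Set.self_mem_Ici
  by_contra hcon
  push_neg at hcon
  obtain ⟨t₁, ht₁, hXt₁⟩ := hcon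
  set S : Set ℝ := {t | t ∈ Icc 0 t₁ ∧ (X t ≤ 0 ∨ δ₀ ≤ X t)} with hSdef
  have hSne : S.Nonempty := ⟨t₁, ⟨⟨ht₁, le_refl _⟩, Or.inl hXt₁⟩⟩
  have hSbdd : BddBelow S := ⟨0, fun t ht => ht.1.1⟩
  have hSclosed : IsClosed S := by
    have hset : S = Icc 0 t₁ ∩ X ⁻¹' (Iic 0 ∪ Ici δ₀) := by
      ext t
      simp only [hSdef, mem_setOf_eq, mem_inter_iff, mem_preimage, mem_union, mem_Iic, mem_Ici]
    rw [hset]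
    exact (hX.mono (Icc_subset_Ici_self)).preimage_isClosed_of_isClosed isClosed_Icc
      (isClosed_Iic.union isClosed_Ici)
  set t₂ := sInf S with ht₂def
  have ht₂S : t₂ ∈ S := hSclosed.csInf_mem hSne hSbdd
  have ht₂0 : 0 ≤ t₂ := ht₂S.1.1
  have hbefore : ∀ t : ℝ, 0 ≤ t → t < t₂ → 0 < X t ∧ X t < δ₀ := by
    intro t ht htlt
    by_contra hc
    push_neg at hc
    have htS : t ∈ S := by
      refine ⟨⟨ht, le_trans htlt.le ht₂S.1.2⟩, ?_⟩
      rcases le_or_gt (X t) 0 with h1 | h1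
      · exact Or.inl h1
      · exact Or.inr (hc h1)
    exact absurd (csInf_le hSbdd htS) (not_le.mpr htlt)
  have ht₂pos : 0 < t₂ := by
    rcases ht₂0.lt_or_eq with h' | h'
    · exact h'
    · exfalso
      rw [← h'] at ht₂S
      rcases ht₂S.2 with h2 | h2 <;> rw [hX0] at h2 <;> linarith
  -- the limit from the left : 0 ≤ X t₂ ≤ δ₀
  have htend : Filter.Tendsto X (nhdsWithin t₂ (Ico 0 t₂)) (nhds (X t₂)) :=
    ((hX t₂ ht₂0).tendsto).mono_left (nhdsWithin_mono t₂ Ico_subset_Ici_self)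
  have hneBot : (nhdsWithin t₂ (Ico 0 t₂)).NeBot := by
    rw [nhdsWithin_Ico_eq_nhdsLT ht₂pos]
    infer_instance
  have hXt₂0 : 0 ≤ X t₂ := by
    refine ge_of_tendsto htend ?_
    filter_upwards [self_mem_nhdsWithin] with s hs
    exact (hbefore s hs.1 hs.2).1.le
  have hXt₂δ : X t₂ ≤ δ₀ := by
    refine le_of_tendsto htend ?_
    filter_upwards [self_mem_nhdsWithin] with s hs
    exact (hbefore s hs.1 hs.2).2.le
  -- basic bounds on g
  have hgprop : ∀ s : ℝ, 0 ≤ s → s < t₂ → g s ≤ 0 ∧ -g s ≤ L * X s ∧ |g s| ≤ L * δ₀ := by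
    intro s hs hslt
    obtain ⟨hX1, hX2⟩ := hbefore s hs hslt
    have habs : |X s| < δ₀ := by rwa [abs_of_pos hX1]
    have hhb := hh (X s) habs
    rw [abs_of_pos hX1] at hhb
    obtain ⟨hh1, hh2⟩ := abs_le.mp hhb
    simp only [hgdef]
    refine ⟨?_, ?_, ?_⟩
    · nlinarith
    · nlinarith
    · rw [abs_le]
      constructor <;> nlinarith
  -- kernel integrability
  have hker : ∀ t : ℝ, IntervalIntegrable (fun s => (t - s) ^ (β - 1)) volume 0 t := by
    intro t
    have h1 : IntervalIntegrable (fun x : ℝ => x ^ (β - 1)) volume 0 t :=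
      intervalIntegrable_rpow' (by linarith)
    have h2 := (h1.comp_sub_left t).symm
    simpa using h2
  have hkermeas : ∀ t : ℝ, Measurable (fun s : ℝ => (t - s) ^ (β - 1)) :=
    fun t => (measurable_const.sub measurable_id).pow measurable_const
  have heqt₂ := heq' t₂ ht₂0
  by_cases hint : IntervalIntegrable (fun s => (t₂ - s) ^ (β - 1) * g s) volume 0 t₂
  · -- main case
    have hprod : IntegrableOn (fun s => (t₂ - s) ^ (β - 1) * g s) (Ioo 0 t₂) volume := by
      rwa [intervalIntegrable_iff_integrableOn_Ioo_of_le ht₂0] at hint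
    have gmeas : AEStronglyMeasurable g (volume.restrict (Ioo 0 t₂)) := by
      have hm : AEStronglyMeasurable
          (fun s => ((t₂ - s) ^ (β - 1))⁻¹ * ((t₂ - s) ^ (β - 1) * g s))
          (volume.restrict (Ioo 0 t₂)) :=
        ((hkermeas t₂).inv.aestronglyMeasurable).mul hprod.aestronglyMeasurable
      refine hm.congr ?_
      filter_upwards [ae_restrict_mem measurableSet_Ioo] with s hs
      have hpos : (0:ℝ) < t₂ - s := by linarith [hs.2]
      have hne : (t₂ - s) ^ (β - 1) ≠ 0 := (Real.rpow_pos_of_pos hpos _).ne'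
      field_simp
    -- general integrability of the products
    have hII : ∀ a b t : ℝ, 0 ≤ a → a ≤ b → b ≤ t₂ → b ≤ t →
        IntervalIntegrable (fun s => (t - s) ^ (β - 1) * g s) volume a b := by
      intro a b t ha hab hbt₂ hbt
      rw [intervalIntegrable_iff_integrableOn_Ioo_of_le hab]
      have hkint : IntegrableOn (fun s => (t - s) ^ (β - 1)) (Ioo a b) volume := by
        have := (hker t).mono_set (by
          rw [uIcc_of_le hab, uIcc_of_le (le_trans ha (le_trans hab hbt))]
          exact Icc_subset_Icc ha hbt)
        rwa [intervalIntegrable_iff_integrableOn_Ioo_of_le hab] at this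
      refine Integrable.mono' (hkint.const_mul (L * δ₀)) ?_ ?_
      · exact ((hkermeas t).aestronglyMeasurable).mul
          (gmeas.mono_measure (Measure.restrict_mono (Ioo_subset_Ioo ha hbt₂) le_rfl))
      · filter_upwards [ae_restrict_mem measurableSet_Ioo] with s hs
        have hs0 : 0 ≤ s := le_trans ha hs.1.le
        have hslt : s < t₂ := lt_of_lt_of_le hs.2 hbt₂
        have hker_nonneg : 0 ≤ (t - s) ^ (β - 1) :=
          Real.rpow_nonneg (by linarith [lt_of_lt_of_le hs.2 hbt]) _
        have hgb := (hgprop s hs0 hslt).2.2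
        rw [Real.norm_eq_abs, abs_mul, abs_of_nonneg hker_nonneg]
        calc (t - s) ^ (β - 1) * |g s| ≤ (t - s) ^ (β - 1) * (L * δ₀) :=
              mul_le_mul_of_nonneg_left hgb hker_nonneg
          _ = L * δ₀ * (t - s) ^ (β - 1) := by ring
    -- the integral up to t₂ is nonpositive, hence X t₂ ≤ x₀ < δ₀, so X t₂ = 0
    have hint_nonpos : (∫ s in (0:ℝ)..t₂, (t₂ - s) ^ (β - 1) * g s) ≤ 0 := by
      have h0 : IntervalIntegrable (fun _ : ℝ => (0:ℝ)) volume 0 t₂ :=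
        intervalIntegrable_const
      have hle : (fun s => (t₂ - s) ^ (β - 1) * g s) ≤ᵐ[volume.restrict (Icc 0 t₂)]
          (fun _ => (0:ℝ)) := by
        rw [← Measure.restrict_congr_set Ioo_ae_eq_Icc]
        filter_upwards [ae_restrict_mem measurableSet_Ioo] with s hs
        have hker_nonneg : 0 ≤ (t₂ - s) ^ (β - 1) := Real.rpow_nonneg (by linarith [hs.2]) _
        exact mul_nonpos_of_nonneg_of_nonpos hker_nonneg (hgprop s hs.1.le hs.2).1
      simpa using integral_mono_ae_restrict ht₂0 hint h0 hle
    have hXt₂x₀ : X t₂ ≤ x₀ := by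
      rw [heqt₂]
      nlinarith [one_div_pos.mpr hΓ]
    have hXt₂eq : X t₂ = 0 := by
      rcases ht₂S.2 with h2 | h2
      · linarith
      · linarith
    -- choose the point close to t₂
    set D : ℝ := β * Real.Gamma β / (2 * L) with hDdef
    have hD : 0 < D := by rw [hDdef]; positivity
    set ε : ℝ := min t₂ (D ^ (1/β)) with hεdef
    have hεpos : 0 < ε := lt_min ht₂pos (Real.rpow_pos_of_pos hD _)
    have hεt₂ : ε ≤ t₂ := min_le_left _ _
    have hεβ : ε ^ β ≤ D := by
      calc ε ^ β ≤ (D ^ (1/β)) ^ β :=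
            Real.rpow_le_rpow hεpos.le (min_le_right _ _) hβ0.le
        _ = D := by
            rw [← Real.rpow_mul hD.le, one_div, inv_mul_cancel₀ hβ0.ne', Real.rpow_one]
    set t' : ℝ := t₂ - ε with ht'def
    have ht'0 : 0 ≤ t' := by rw [ht'def]; linarith
    have ht'lt : t' < t₂ := by rw [ht'def]; linarith
    -- maximum of X on [t', t₂]
    obtain ⟨τ, hτmem, hτmax⟩ := (isCompact_Icc : IsCompact (Icc t' t₂)).exists_isMaxOn
      ⟨t₂, ht'lt.le, le_rfl⟩ (hX.mono (fun x hx => le_trans ht'0 hx.1))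
    set M : ℝ := X τ with hMdef
    have hMpos : 0 < M := lt_of_lt_of_le (hbefore t' ht'0 ht'lt).1 (hτmax ⟨le_rfl, ht'lt.le⟩)
    have hτ0 : 0 ≤ τ := le_trans ht'0 hτmem.1
    have hτlt : τ < t₂ := by
      rcases hτmem.2.lt_or_eq with h' | h'
      · exact h'
      · exfalso; rw [hMdef, h', hXt₂eq] at hMpos; exact lt_irrefl 0 hMpos
    -- decompose the integral
    have hII1 : IntervalIntegrable (fun s => (τ - s) ^ (β - 1) * g s) volume 0 τ :=
      hII 0 τ τ le_rfl hτ0 hτlt.le le_rfl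
    have hII2 : IntervalIntegrable (fun s => (t₂ - s) ^ (β - 1) * g s) volume 0 τ :=
      hII 0 τ t₂ le_rfl hτ0 hτlt.le hτlt.le
    have hII3 : IntervalIntegrable (fun s => (t₂ - s) ^ (β - 1) * g s) volume τ t₂ :=
      hII τ t₂ t₂ hτ0 hτlt.le le_rfl le_rfl
    have hsplit : (∫ s in (0:ℝ)..t₂, (t₂ - s) ^ (β - 1) * g s) =
        (∫ s in (0:ℝ)..τ, (t₂ - s) ^ (β - 1) * g s) +
        (∫ s in τ..t₂, (t₂ - s) ^ (β - 1) * g s) :=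
      (integral_add_adjacent_intervals hII2 hII3).symm
    -- comparison on [0, τ]
    have hcomp : (∫ s in (0:ℝ)..τ, (τ - s) ^ (β - 1) * g s) ≤
        (∫ s in (0:ℝ)..τ, (t₂ - s) ^ (β - 1) * g s) := by
      refine integral_mono_ae_restrict hτ0 hII1 hII2 ?_
      rw [← Measure.restrict_congr_set Ioo_ae_eq_Icc]
      filter_upwards [ae_restrict_mem measurableSet_Ioo] with s hs
      have h1 : (0:ℝ) < τ - s := by linarith [hs.2]
      have h2 : τ - s ≤ t₂ - s := by linarith
      have hkle : (t₂ - s) ^ (β - 1) ≤ (τ - s) ^ (β - 1) :=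
        Real.rpow_le_rpow_of_nonpos h1 h2 (by linarith)
      exact mul_le_mul_of_nonpos_right hkle
        (hgprop s hs.1.le (lt_trans hs.2 hτlt)).1
    -- the tail integral bound
    have htail : -(∫ s in τ..t₂, (t₂ - s) ^ (β - 1) * g s) ≤ L * M * ((t₂ - τ) ^ β / β) := by
      have hkint : IntervalIntegrable (fun s => (t₂ - s) ^ (β - 1)) volume τ t₂ :=
        (hker t₂).mono_set (by
          rw [uIcc_of_le hτlt.le, uIcc_of_le ht₂0]
          exact Icc_subset_Icc hτ0 le_rfl)
      have e1 : (∫ s in τ..t₂, (t₂ - s) ^ (β - 1)) = (t₂ - τ) ^ β / β := by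
        have hc : (fun s : ℝ => (t₂ - s) ^ (β - 1)) =
            fun s => (fun u : ℝ => u ^ (β - 1)) (t₂ - s) := rfl
        rw [hc, intervalIntegral.integral_comp_sub_left (fun u : ℝ => u ^ (β - 1)) t₂,
          sub_self, integral_rpow (Or.inl (by linarith))]
        have hb : β - 1 + 1 = β := by ring
        rw [hb, Real.zero_rpow hβ0.ne', sub_zero]
      have hmono : (∫ s in τ..t₂, -((t₂ - s) ^ (β - 1) * g s)) ≤
          (∫ s in τ..t₂, (L * M) * (t₂ - s) ^ (β - 1)) := by
        refine integral_mono_ae_restrict hτlt.le hII3.neg (hkint.const_mul (L * M)) ?_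
        rw [← Measure.restrict_congr_set Ioo_ae_eq_Icc]
        filter_upwards [ae_restrict_mem measurableSet_Ioo] with s hs
        have hker_nonneg : 0 ≤ (t₂ - s) ^ (β - 1) := Real.rpow_nonneg (by linarith [hs.2]) _
        have hs0 : 0 ≤ s := le_trans hτ0 hs.1.le
        have hgle : -g s ≤ L * X s := (hgprop s hs0 hs.2).2.1
        have hXM : X s ≤ M := hτmax ⟨le_trans hτmem.1 hs.1.le, hs.2.le⟩
        have : -((t₂ - s) ^ (β - 1) * g s) = (t₂ - s) ^ (β - 1) * (-g s) := by ring
        rw [this]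
        calc (t₂ - s) ^ (β - 1) * (-g s) ≤ (t₂ - s) ^ (β - 1) * (L * X s) :=
              mul_le_mul_of_nonneg_left hgle hker_nonneg
          _ ≤ (t₂ - s) ^ (β - 1) * (L * M) :=
              mul_le_mul_of_nonneg_left (mul_le_mul_of_nonneg_left hXM hLpos.le) hker_nonneg
          _ = (L * M) * (t₂ - s) ^ (β - 1) := by ring
      rw [intervalIntegral.integral_neg] at hmono
      rw [intervalIntegral.integral_const_mul, e1] at hmono
      exact hmono
    -- assemble
    have heqτ := heq' τ hτ0
    have hzero : (0:ℝ) = x₀ + (1 / Real.Gamma β) *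
        ∫ s in (0:ℝ)..t₂, (t₂ - s) ^ (β - 1) * g s := by rw [← heqt₂]; exact hXt₂eq.symm
    have hXτle : M ≤ (1 / Real.Gamma β) * (L * M * ((t₂ - τ) ^ β / β)) := by
      have hstep : M = (1 / Real.Gamma β) *
          ((∫ s in (0:ℝ)..τ, (τ - s) ^ (β - 1) * g s) -
           (∫ s in (0:ℝ)..t₂, (t₂ - s) ^ (β - 1) * g s)) := by
        rw [hMdef, heqτ]
        linarith [hzero]
      have hdiff : (∫ s in (0:ℝ)..τ, (τ - s) ^ (β - 1) * g s) -
          (∫ s in (0:ℝ)..t₂, (t₂ - s) ^ (β - 1) * g s) ≤ L * M * ((t₂ - τ) ^ β / β) := by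
        rw [hsplit]
        have := hcomp
        have := htail
        linarith
      calc M = (1 / Real.Gamma β) *
          ((∫ s in (0:ℝ)..τ, (τ - s) ^ (β - 1) * g s) -
           (∫ s in (0:ℝ)..t₂, (t₂ - s) ^ (β - 1) * g s)) := hstep
        _ ≤ (1 / Real.Gamma β) * (L * M * ((t₂ - τ) ^ β / β)) :=
            mul_le_mul_of_nonneg_left hdiff (one_div_pos.mpr hΓ).le
    -- final contradiction
    have hpow : (t₂ - τ) ^ β ≤ D := by
      have h1 : t₂ - τ ≤ ε := by
        have : t' ≤ τ := hτmem.1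
        rw [ht'def] at this
        linarith
      calc (t₂ - τ) ^ β ≤ ε ^ β := Real.rpow_le_rpow (by linarith) h1 hβ0.le
        _ ≤ D := hεβ
    have hfinal : M ≤ M / 2 := by
      have h1 : (1 / Real.Gamma β) * (L * M * ((t₂ - τ) ^ β / β)) ≤
          (1 / Real.Gamma β) * (L * M * (D / β)) := by
        refine mul_le_mul_of_nonneg_left ?_ (one_div_pos.mpr hΓ).le
        refine mul_le_mul_of_nonneg_left ?_ (mul_nonneg hLpos.le hMpos.le)
        exact div_le_div_of_nonneg_right hpow hβ0.le
      have hΓne : Real.Gamma β ≠ 0 := hΓ.ne'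
      have hLne : L ≠ 0 := hLpos.ne'
      have hβne : β ≠ 0 := hβ0.ne'
      have h2 : (1 / Real.Gamma β) * (L * M * (D / β)) = M / 2 := by
        rw [hDdef]
        field_simp
      linarith [hXτle]
    linarith
  · -- non-integrable case : the integral is 0 and X t₂ = x₀, contradiction
    rw [intervalIntegral.integral_undef hint] at heqt₂
    simp only [mul_zero, add_zero] at heqt₂
    rcases ht₂S.2 with h2 | h2 <;> rw [heqt₂] at h2 <;> linarith
end
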